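/- Let r, σ > 0 with r ≠ σ²/2, set δ = r/(r − σ²/2), and let C₁, S₀ > 0. For t ≥ 0 define f_t(y) = σY₀e^{(r−σ²/2)t + σy} / ((δ−1)C₁Y₀e^{(r−σ²/2)t + σy} − δC₁Y₀e^{σy} + 1) where Y₀ = S₀/(σ + C₁S₀), on the domain of y where the denominator is positive and f_t(y) > 0. Then f_t is strictly monotone in y on this domain, hence injective. -/
import Mathlib


/-- The risk-neutral price map f_t(y) of the VVE model is strictly monotone
    in the Brownian variable y on its positivity domain, hence injective. -/
theorem vve_ft_injective (r σ C₁ S₀ : ℝ) (hr : 0 < r) (hσ : 0 < σ)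
    (hC₁ : 0 < C₁) (hS₀ : 0 < S₀) (hrσ : r ≠ σ ^ 2 / 2)
    (δ Y₀ : ℝ) (hδ : δ = r / (r - σ ^ 2 / 2)) (hY₀ : Y₀ = S₀ / (σ + C₁ * S₀))
    (t : ℝ) (ht : 0 ≤ t)
    (f : ℝ → ℝ)
    (hf : ∀ y, f y = σ * Y₀ * Real.exp ((r - σ ^ 2 / 2) * t + σ * y)
      / ((δ - 1) * C₁ * Y₀ * Real.exp ((r - σ ^ 2 / 2) * t + σ * y)
          - δ * C₁ * Y₀ * Real.exp (σ * y) + 1))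
    (D : Set ℝ)
    (hD : D = {y : ℝ | 0 < (δ - 1) * C₁ * Y₀ * Real.exp ((r - σ ^ 2 / 2) * t + σ * y)
          - δ * C₁ * Y₀ * Real.exp (σ * y) + 1 ∧ 0 < f y}) :
    (StrictMonoOn f D ∨ StrictAntiOn f D) ∧ Set.InjOn f D := by
  have hY₀pos : 0 < Y₀ := by
    rw [hY₀]
    positivity
  set A := Real.exp ((r - σ ^ 2 / 2) * t) with hA
  have hApos : 0 < A := Real.exp_pos _
  have hKpos : 0 < σ * Y₀ * A := by positivity
  set c := (δ - 1) * C₁ * Y₀ * A - δ * C₁ * Y₀ with hc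
  have hden : ∀ y, (δ - 1) * C₁ * Y₀ * Real.exp ((r - σ ^ 2 / 2) * t + σ * y)
      - δ * C₁ * Y₀ * Real.exp (σ * y) + 1 = c * Real.exp (σ * y) + 1 := by
    intro y
    rw [Real.exp_add]
    ring
  have hf' : ∀ y, f y = σ * Y₀ * A * Real.exp (σ * y) / (c * Real.exp (σ * y) + 1) := by
    intro y
    rw [hf y, hden y, Real.exp_add, ← mul_assoc]
  have hmono : StrictMonoOn f D := by
    intro y₁ h₁ y₂ h₂ hlt
    rw [hD] at h₁ h₂
    have d₁ : 0 < c * Real.exp (σ * y₁) + 1 := by rw [← hden]; exact h₁.1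
    have d₂ : 0 < c * Real.exp (σ * y₂) + 1 := by rw [← hden]; exact h₂.1
    rw [hf' y₁, hf' y₂, div_lt_div_iff₀ d₁ d₂]
    have hE : Real.exp (σ * y₁) < Real.exp (σ * y₂) :=
      Real.exp_lt_exp.2 (by nlinarith)
    nlinarith [Real.exp_pos (σ * y₁), Real.exp_pos (σ * y₂)]
  exact ⟨Or.inl hmono, hmono.injOn⟩
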